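/- For a real number $q$ with $q > 0$ and $q \ne 1$, and for all positive integers $n$ and $r$, $\sum_{\ell=1}^{n} q^{\ell-1} \binom{\ell+r-1}{r}_q H_{\ell+r-1}(q) = \binom{n+r}{r+1}_q H_{n+r-1}(q) - \frac{q^{r}}{[r+1]_q} \binom{n+r-1}{r+1}_q$. -/

import Mathlib

/-- The `q`-integer `[n]_q = (1 - q^n)/(1 - q)`. -/
noncomputable def qint (q : ℝ) (n : ℕ) : ℝ := (1 - q ^ n) / (1 - q)

/-- The `q`-factorial `[n]_q! = [n]_q [n-1]_q ⋯ [1]_q`, with `[0]_q! = 1`. -/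
noncomputable def qfact (q : ℝ) : ℕ → ℝ
  | 0 => 1
  | n + 1 => qint q (n + 1) * qfact q n

/-- The `q`-binomial coefficient `C(n,k)_q = [n]_q!/([k]_q! [n-k]_q!)`, equal to `0` for `k > n`. -/
noncomputable def qbinom (q : ℝ) (n k : ℕ) : ℝ :=
  if k ≤ n then qfact q n / (qfact q k * qfact q (n - k)) else 0

/-- The `q`-hyperharmonic numbers: `H_n^{(0)}(q) = 1/(q [n]_q)` and
`H_n^{(r)}(q) = ∑_{j=1}^n q^j H_j^{(r-1)}(q)` for `r ≥ 1` (so `H_0^{(r)}(q) = 0`). -/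
noncomputable def qhyp (q : ℝ) : ℕ → ℕ → ℝ
  | 0, n => 1 / (q * qint q n)
  | r + 1, n => ∑ j ∈ Finset.Icc 1 n, q ^ j * qhyp q r j

/-- The `q`-harmonic number `H_m(q) = ∑_{j=1}^m q^{j-1}/[j]_q` (with `H_0(q) = 0`). -/
noncomputable def qharm (q : ℝ) (m : ℕ) : ℝ := ∑ j ∈ Finset.Icc 1 m, q ^ (j - 1) / qint q j

lemma one_sub_qpow_ne (q : ℝ) (hq : 0 < q) (hq1 : q ≠ 1) {k : ℕ} (hk : k ≠ 0) :
    1 - q ^ k ≠ 0 := by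
  rcases lt_or_gt_of_ne hq1 with h | h
  · have : q ^ k < 1 := pow_lt_one₀ hq.le h hk
    linarith
  · have : 1 < q ^ k := one_lt_pow₀ h hk
    linarith

lemma one_sub_q_ne (q : ℝ) (hq1 : q ≠ 1) : 1 - q ≠ 0 := sub_ne_zero.2 (Ne.symm hq1)

lemma qint_ne (q : ℝ) (hq : 0 < q) (hq1 : q ≠ 1) {k : ℕ} (hk : k ≠ 0) : qint q k ≠ 0 :=
  div_ne_zero (one_sub_qpow_ne q hq hq1 hk) (one_sub_q_ne q hq1)

lemma qfact_succ (q : ℝ) (n : ℕ) : qfact q (n + 1) = qint q (n + 1) * qfact q n := rfl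

lemma qfact_ne (q : ℝ) (hq : 0 < q) (hq1 : q ≠ 1) : ∀ k, qfact q k ≠ 0
  | 0 => one_ne_zero
  | k + 1 => mul_ne_zero (qint_ne q hq hq1 (Nat.succ_ne_zero k)) (qfact_ne q hq hq1 k)

lemma qbinom_eq (q : ℝ) {n k : ℕ} (h : k ≤ n) :
    qbinom q n k = qfact q n / (qfact q k * qfact q (n - k)) := if_pos h

lemma qbinom_self (q : ℝ) (hq : 0 < q) (hq1 : q ≠ 1) (n : ℕ) : qbinom q n n = 1 := by
  rw [qbinom_eq q le_rfl, Nat.sub_self]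
  show qfact q n / (qfact q n * 1) = 1
  rw [mul_one, div_self (qfact_ne q hq hq1 n)]

lemma qharm_succ (q : ℝ) (m : ℕ) :
    qharm q (m + 1) = qharm q m + q ^ m / qint q (m + 1) := by
  rw [qharm, qharm, Finset.sum_Icc_succ_top (by omega : 1 ≤ m + 1), Nat.add_sub_cancel]

lemma qint_one (q : ℝ) (hq1 : q ≠ 1) : qint q 1 = 1 := by
  rw [qint, pow_one, div_self (one_sub_q_ne q hq1)]

lemma qint_add (q : ℝ) (hq1 : q ≠ 1) (a b : ℕ) :
    qint q (a + b) = qint q a + q ^ a * qint q b := by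
  rw [qint, qint, qint, pow_add]
  field_simp
  ring

lemma key_step (q Q1 t a c G Fs Fp H : ℝ) (ha : a ≠ 0) (hc : c ≠ 0)
    (hb : a + Q1 ≠ 0) (hd : a + Q1 * c ≠ 0) (hFs : Fs ≠ 0) (hFp : Fp ≠ 0) :
    (a + Q1 * c) * G / (c * Fs * (a * Fp)) * H - t / c * (G / (c * Fs * Fp)) +
      q * Q1 * ((a + Q1 * c) * G / (Fs * ((a + Q1) * (a * Fp))) *
        (H + Q1 * t / (a + Q1 * c))) =
    (a + Q1 + q * Q1 * c) * ((a + Q1 * c) * G) / (c * Fs * ((a + Q1) * (a * Fp))) *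
        (H + Q1 * t / (a + Q1 * c)) -
      t / c * ((a + Q1 * c) * G / (c * Fs * (a * Fp))) := by
  field_simp
  ring

set_option maxHeartbeats 1000000 in
/-- For `q > 0`, `q ≠ 1` and positive integers `n, r`,
`∑_{ℓ=1}^n q^{ℓ-1} C(ℓ+r-1, r)_q H_{ℓ+r-1}(q)
   = C(n+r, r+1)_q H_{n+r-1}(q) - (q^r/[r+1]_q) C(n+r-1, r+1)_q`. -/
theorem sum_qpow_qbinom_mul_qharm (q : ℝ) (hq : 0 < q) (hq1 : q ≠ 1) (n r : ℕ)
    (hn : 1 ≤ n) (hr : 1 ≤ r) :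
    ∑ ℓ ∈ Finset.Icc 1 n, q ^ (ℓ - 1) * qbinom q (ℓ + r - 1) r * qharm q (ℓ + r - 1) =
      qbinom q (n + r) (r + 1) * qharm q (n + r - 1) -
        q ^ r / qint q (r + 1) * qbinom q (n + r - 1) (r + 1) := by
  obtain ⟨s, rfl⟩ : ∃ s, r = s + 1 := ⟨r - 1, by omega⟩
  have hfne := qfact_ne q hq hq1
  have h1q := one_sub_q_ne q hq1
  induction n, hn using Nat.le_induction with
  | base =>
    simp only [Finset.Icc_self, Finset.sum_singleton]
    have e1 : 1 + (s + 1) - 1 = s + 1 := by omega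
    have e2 : 1 + (s + 1) = s + 2 := by omega
    rw [e1, e2, qbinom_self q hq hq1, pow_zero, qbinom_self q hq hq1,
      qbinom, if_neg (by omega)]
    ring
  | succ n hn ih =>
    rw [Finset.sum_Icc_succ_top (by omega : 1 ≤ n + 1), ih]
    obtain ⟨p, rfl⟩ : ∃ p, n = p + 1 := ⟨n - 1, by omega⟩
    rcases p with _ | p
    · -- n = 1, step to 2
      norm_num
      simp only [show 1 + (s + 1) = s + 2 from by omega, show 2 + s = s + 2 from by omega,
        show 2 + (s + 1) = s + 3 from by omega, show s + 1 + 1 = s + 2 from by omega]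
      rw [qbinom_self q hq hq1, qbinom, if_neg (by omega),
        qbinom_eq q (by omega : s + 1 ≤ s + 2), qbinom_eq q (by omega : s + 2 ≤ s + 3)]
      rw [show s + 2 - (s + 1) = 1 from by omega, show s + 3 - (s + 2) = 1 from by omega,
        qharm_succ q (s + 1),
        show qfact q (s + 3) = qint q (s + 3) * qfact q (s + 2) from rfl,
        show qfact q (s + 2) = qint q (s + 2) * qfact q (s + 1) from rfl,
        show qfact q 1 = qint q 1 * qfact q 0 from rfl,
        show qfact q 0 = (1 : ℝ) from rfl, qint_one q hq1,
        show s + 3 = 1 + (s + 2) from by omega, qint_add q hq1 1 (s + 2),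
        qint_one q hq1, pow_one]
      have hc : qint q (s + 2) ≠ 0 := qint_ne q hq hq1 (by omega)
      field_simp [hc, hfne (s + 1)]
      ring
    · -- n = p + 2, step to p + 3
      simp only [show p + 1 + 1 + 1 - 1 = p + 2 from by omega,
        show p + 1 + 1 + 1 + (s + 1) - 1 = p + s + 3 from by omega,
        show p + 1 + 1 + 1 + (s + 1) = p + s + 4 from by omega,
        show p + 1 + 1 + (s + 1) = p + s + 3 from by omega,
        show p + 1 + 1 + (s + 1) - 1 = p + s + 2 from by omega,
        show p + s + 3 - 1 = p + s + 2 from by omega,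
        show p + s + 4 - 1 = p + s + 3 from by omega,
        show s + 1 + 1 = s + 2 from by omega]
      rw [qbinom_eq q (by omega : s + 1 ≤ p + s + 3),
        qbinom_eq q (by omega : s + 2 ≤ p + s + 3),
        qbinom_eq q (by omega : s + 2 ≤ p + s + 2),
        qbinom_eq q (by omega : s + 2 ≤ p + s + 4)]
      rw [show p + s + 3 - (s + 1) = p + 2 from by omega,
        show p + s + 3 - (s + 2) = p + 1 from by omega,
        show p + s + 2 - (s + 2) = p from by omega,
        show p + s + 4 - (s + 2) = p + 2 from by omega]
      rw [show p + s + 3 = (p + s + 2) + 1 from by omega, qharm_succ q (p + s + 2)]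
      rw [show qfact q (p + s + 4) = qint q (p + s + 4) * qfact q (p + s + 2 + 1) from by
          rw [show p + s + 4 = (p + s + 3) + 1 from by omega]; rfl,
        show qfact q (p + s + 2 + 1) = qint q (p + s + 2 + 1) * qfact q (p + s + 2) from rfl,
        show qfact q (p + 2) = qint q (p + 2) * qfact q (p + 1) from rfl,
        show qfact q (p + 1) = qint q (p + 1) * qfact q p from rfl,
        show qfact q (s + 2) = qint q (s + 2) * qfact q (s + 1) from rfl]
      have hb : qint q (p + 2) = qint q (p + 1) + q ^ (p + 1) := by
        rw [show p + 2 = (p + 1) + 1 from by omega, qint_add q hq1 (p + 1) 1,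
          qint_one q hq1, mul_one]
      have hd : qint q (p + s + 2 + 1) = qint q (p + 1) + q ^ (p + 1) * qint q (s + 2) := by
        rw [show p + s + 2 + 1 = (p + 1) + (s + 2) from by omega, qint_add q hq1]
      have he : qint q (p + s + 4) =
          qint q (p + 1) + q ^ (p + 1) + q ^ (p + 2) * (qint q (s + 2)) := by
        rw [show p + s + 4 = (p + 2) + (s + 2) from by omega, qint_add q hq1, hb]
      rw [hb, hd, he]
      have ha : qint q (p + 1) ≠ 0 := qint_ne q hq hq1 (by omega)
      have hc : qint q (s + 2) ≠ 0 := qint_ne q hq hq1 (by omega)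
      have hb' : qint q (p + 1) + q ^ (p + 1) ≠ 0 := hb ▸ qint_ne q hq hq1 (by omega)
      have hd' : qint q (p + 1) + q ^ (p + 1) * qint q (s + 2) ≠ 0 :=
        hd ▸ qint_ne q hq hq1 (by omega)
      linear_combination key_step q (q ^ (p + 1)) (q ^ (s + 1)) (qint q (p + 1))
        (qint q (s + 2)) (qfact q (p + s + 2)) (qfact q (s + 1)) (qfact q p)
        (qharm q (p + s + 2)) ha hc hb' hd' (hfne (s + 1)) (hfne p)
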